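/- Let G be a finite group and let K and L be distinct sol-components of G. Then K and L normalize each other, [K,L] ≤ Sol(K) ∩ Sol(L), and Sol(K) ∩ Sol(L) is a subnormal subgroup of Sol(G). -/

import Mathlib

open Pointwise

/-- A subgroup `H` of `G` is *subnormal* if there is a finite chain
`H = c 0 ⊴ c 1 ⊴ ⋯ ⊴ c n = G` with each term normal in the next. -/
def IsSubnormal {G : Type*} [Group G] (H : Subgroup G) : Prop :=
  ∃ (n : ℕ) (c : ℕ → Subgroup G), c 0 = H ∧ c n = ⊤ ∧
    ∀ i < n, c i ≤ c (i + 1) ∧ ((c i).subgroupOf (c (i + 1))).Normal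

/-- A group is *quasisimple* if it is perfect and its quotient by its center is simple. -/
def IsQuasisimpleGroup (Q : Type*) [Group Q] : Prop :=
  commutator Q = ⊤ ∧ IsSimpleGroup (Q ⧸ Subgroup.center Q)

/-- A *component* of `G` is a quasisimple subnormal subgroup. -/
def IsComponent {G : Type*} [Group G] (K : Subgroup G) : Prop :=
  IsSubnormal K ∧ IsQuasisimpleGroup ↥K

/-- The *layer* `E(G)`: the subgroup generated by all components of `G`. -/
def layer (G : Type*) [Group G] : Subgroup G :=
  sSup {K : Subgroup G | IsComponent K}

/-- `Sol(G)`: the join of all solvable normal subgroups of `G`. -/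
def solRadical (G : Type*) [Group G] : Subgroup G :=
  sSup {N : Subgroup G | N.Normal ∧ IsSolvable ↥N}

instance solRadical_normal (G : Type*) [Group G] : (solRadical G).Normal := by
  constructor
  intro n hn g
  have h : solRadical G ≤ (solRadical G).comap (MulAut.conj g).toMonoidHom := by
    apply sSup_le
    intro N hN x hx
    have hmem : g * x * g⁻¹ ∈ N := hN.1.conj_mem x hx g
    exact Subgroup.mem_comap.mpr
      (le_sSup hN (by simpa [MulAut.conj_apply] using hmem))
  simpa [MulAut.conj_apply] using h hn

/-- A *sol-component* of `G` is a perfect subnormal subgroup of `G` whose image in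
`G/Sol(G)` is a component of `G/Sol(G)`. -/
def IsSolComponent {G : Type*} [Group G] (K : Subgroup G) : Prop :=
  IsSubnormal K ∧ commutator ↥K = ⊤ ∧
    IsComponent (K.map (QuotientGroup.mk' (solRadical G)))

/-- `E_sol(G)`: the subgroup generated by all sol-components of `G`. -/
def solLayer (G : Type*) [Group G] : Subgroup G :=
  sSup {K : Subgroup G | IsSolComponent K}

 
/-! ### Auxiliary machinery -/

section Aux

open Subgroup
open scoped commutatorElement

variable {G : Type*} [Group G]

/-- Relative normality for subgroups of the same ambient group. -/
def RelNorm (H K : Subgroup G) : Prop :=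
  H ≤ K ∧ ∀ h ∈ H, ∀ g ∈ K, g * h * g⁻¹ ∈ H

/-- A subnormal chain of prescribed length. -/
def SubnormIn (H M : Subgroup G) (n : ℕ) : Prop :=
  ∃ c : ℕ → Subgroup G, c 0 = H ∧ c n = M ∧ ∀ i < n, RelNorm (c i) (c (i + 1))

/-- Relative subnormality. -/
def Subnorm (H M : Subgroup G) : Prop := ∃ n, SubnormIn H M n

lemma RelNorm.refl (H : Subgroup G) : RelNorm H H :=
  ⟨le_rfl, fun h hh g hg => mul_mem (mul_mem hg hh) (inv_mem hg)⟩

lemma relNorm_iff {H K : Subgroup G} :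
    RelNorm H K ↔ H ≤ K ∧ (H.subgroupOf K).Normal := by
  constructor
  · rintro ⟨hle, hconj⟩
    refine ⟨hle, ⟨?_⟩⟩
    rintro ⟨x, hxK⟩ hmem ⟨g, hg⟩
    simp only [Subgroup.mem_subgroupOf] at hmem ⊢
    exact hconj x hmem g hg
  · rintro ⟨hle, hN⟩
    refine ⟨hle, fun h hh g hg => ?_⟩
    have := hN.conj_mem ⟨h, hle hh⟩ (Subgroup.mem_subgroupOf.mpr hh) ⟨g, hg⟩
    simpa [Subgroup.mem_subgroupOf] using this

lemma relNorm_top {A : Subgroup G} (h : RelNorm A ⊤) : A.Normal :=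
  ⟨fun n hn g => h.2 n hn g (Subgroup.mem_top g)⟩

lemma chain_mono {c : ℕ → Subgroup G} {m n : ℕ}
    (h : ∀ i < n, RelNorm (c i) (c (i + 1))) (hmn : m ≤ n) :
    ∀ i < m, RelNorm (c i) (c (i + 1)) :=
  fun i hi => h i (lt_of_lt_of_le hi hmn)

lemma chain_le {c : ℕ → Subgroup G} {n : ℕ}
    (h : ∀ i < n, RelNorm (c i) (c (i + 1))) : ∀ i ≤ n, c i ≤ c n := by
  induction n with
  | zero => intro i hi; rw [Nat.le_zero.mp hi]
  | succ n ih =>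
    intro i hi
    rcases Nat.lt_or_ge i (n + 1) with h1 | h1
    · exact le_trans (ih (chain_mono h (Nat.le_succ n)) i (Nat.lt_succ_iff.mp h1))
        (h n (Nat.lt_succ_self n)).1
    · rw [Nat.le_antisymm hi h1]

lemma SubnormIn.le {H M : Subgroup G} {n : ℕ} (h : SubnormIn H M n) : H ≤ M := by
  obtain ⟨c, h0, hn, hc⟩ := h
  rw [← h0, ← hn]
  exact chain_le hc 0 (Nat.zero_le n)

lemma SubnormIn.eq_of_zero {H M : Subgroup G} (h : SubnormIn H M 0) : H = M := by
  obtain ⟨c, h0, hn, _⟩ := h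
  rw [← h0, ← hn]

lemma subnormIn_zero (H : Subgroup G) : SubnormIn H H 0 :=
  ⟨fun _ => H, rfl, rfl, fun i hi => absurd hi (Nat.not_lt_zero i)⟩

lemma SubnormIn.consTop {H B M : Subgroup G} {n : ℕ} (h : SubnormIn H B n)
    (hBM : RelNorm B M) : SubnormIn H M (n + 1) := by
  obtain ⟨c, h0, hn, hc⟩ := h
  refine ⟨fun i => if i ≤ n then c i else M, by simp [h0], by simp, ?_⟩
  intro i hi
  show RelNorm (if i ≤ n then c i else M) (if i + 1 ≤ n then c (i + 1) else M)
  rcases Nat.lt_or_ge i n with h1 | h1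
  · rw [if_pos (Nat.le_of_lt h1), if_pos (Nat.succ_le_of_lt h1)]
    exact hc i h1
  · have hin : i = n := Nat.le_antisymm (Nat.lt_succ_iff.mp hi) h1
    subst hin
    rw [if_pos le_rfl, if_neg (by omega : ¬ i + 1 ≤ i), hn]
    exact hBM

lemma SubnormIn.consBot {H B M : Subgroup G} {n : ℕ} (hHB : RelNorm H B)
    (h : SubnormIn B M n) : SubnormIn H M (n + 1) := by
  obtain ⟨c, h0, hn, hc⟩ := h
  refine ⟨fun i => Nat.rec H (fun j _ => c j) i, rfl, hn, ?_⟩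
  intro i hi
  cases i with
  | zero => simpa [h0] using hHB
  | succ j => exact hc j (Nat.lt_of_succ_lt_succ hi)

lemma SubnormIn.peelTop {H M : Subgroup G} {n : ℕ} (h : SubnormIn H M (n + 1)) :
    ∃ B, SubnormIn H B n ∧ RelNorm B M := by
  obtain ⟨c, h0, hn, hc⟩ := h
  exact ⟨c n, ⟨c, h0, rfl, chain_mono hc (Nat.le_succ n)⟩, hn ▸ hc n (Nat.lt_succ_self n)⟩

lemma SubnormIn.peelBot {H M : Subgroup G} {n : ℕ} (h : SubnormIn H M (n + 1)) :
    ∃ B, RelNorm H B ∧ SubnormIn B M n := by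
  obtain ⟨c, h0, hn, hc⟩ := h
  exact ⟨c 1, h0 ▸ hc 0 (Nat.succ_pos n),
    ⟨fun i => c (i + 1), rfl, hn, fun i hi => hc (i + 1) (Nat.succ_lt_succ hi)⟩⟩

lemma RelNorm.inf {H K : Subgroup G} (h : RelNorm H K) (B : Subgroup G) :
    RelNorm (H ⊓ B) (K ⊓ B) := by
  refine ⟨inf_le_inf_right B h.1, ?_⟩
  intro x hx g hg
  rw [Subgroup.mem_inf] at hx hg ⊢
  exact ⟨h.2 x hx.1 g hg.1, mul_mem (mul_mem hg.2 hx.2) (inv_mem hg.2)⟩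

lemma SubnormIn.inf {H M : Subgroup G} {n : ℕ} (h : SubnormIn H M n) (B : Subgroup G) :
    SubnormIn (H ⊓ B) (M ⊓ B) n := by
  obtain ⟨c, h0, hn, hc⟩ := h
  exact ⟨fun i => c i ⊓ B, by simp only [h0], by simp only [hn], fun i hi => (hc i hi).inf B⟩

lemma SubnormIn.trans {H M M' : Subgroup G} {m n : ℕ} (h1 : SubnormIn H M m)
    (h2 : SubnormIn M M' n) : SubnormIn H M' (m + n) := by
  induction n generalizing M' with
  | zero => rwa [← h2.eq_of_zero]
  | succ n ih =>
    obtain ⟨B, hB, hBM'⟩ := h2.peelTop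
    exact (ih hB).consTop hBM'

lemma RelNorm.subgroupOf {A B : Subgroup G} (h : RelNorm A B) (M : Subgroup G) (hBM : B ≤ M) :
    RelNorm (A.subgroupOf M) (B.subgroupOf M) := by
  constructor
  · exact fun x hx => Subgroup.mem_subgroupOf.mpr (h.1 (Subgroup.mem_subgroupOf.mp hx))
  · intro x hx g hg
    rw [Subgroup.mem_subgroupOf] at hx hg ⊢
    simpa using h.2 x hx g hg

lemma SubnormIn.subgroupOf {A B M : Subgroup G} {n : ℕ} (h : SubnormIn A B n) (hBM : B ≤ M) :
    SubnormIn (A.subgroupOf M) (B.subgroupOf M) n := by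
  obtain ⟨c, h0, hn, hc⟩ := h
  refine ⟨fun i => (c i).subgroupOf M, by simp only [h0], by simp only [hn], fun i hi => ?_⟩
  exact (hc i hi).subgroupOf M (le_trans (hn ▸ chain_le hc (i + 1) hi) hBM)

lemma isSubnormal_iff_subnorm {H : Subgroup G} : _root_.IsSubnormal H ↔ Subnorm H ⊤ := by
  constructor
  · rintro ⟨n, c, h0, hn, hc⟩
    exact ⟨n, c, h0, hn, fun i hi => relNorm_iff.mpr ⟨(hc i hi).1, (hc i hi).2⟩⟩
  · rintro ⟨n, c, h0, hn, hc⟩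
    exact ⟨n, c, h0, hn, fun i hi => ⟨(hc i hi).1, (relNorm_iff.mp (hc i hi)).2⟩⟩

/-! ### Solvability helpers -/

lemma isSolvable_mulEquiv {A B : Type*} [Group A] [Group B] (e : A ≃* B)
    (h : IsSolvable A) : IsSolvable B := by
  haveI : Group.IsSolvable A := h
  exact solvable_of_solvable_injective (f := e.symm.toMonoidHom) e.symm.injective

lemma mem_sup_normal_iff {H N : Subgroup G} (hN : N.Normal) {x : G} :
    x ∈ H ⊔ N ↔ ∃ h ∈ H, ∃ n ∈ N, h * n = x := by
  haveI := hN
  rw [← SetLike.mem_coe, Subgroup.mul_normal H N]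
  simp [Set.mem_mul]

lemma map_subtype_top (H : Subgroup G) : Subgroup.map H.subtype ⊤ = H := by
  rw [← MonoidHom.range_eq_map, Subgroup.range_subtype]

lemma perfect_commutator_self {K : Subgroup G} (h : commutator ↥K = ⊤) : ⁅K, K⁆ = K := by
  have h2 : Subgroup.map K.subtype ⁅(⊤ : Subgroup ↥K), ⊤⁆ = Subgroup.map K.subtype ⊤ := by
    rw [← _root_.commutator_def, h]
  rwa [Subgroup.map_commutator, map_subtype_top] at h2

/-! ### The solvable radical -/

lemma le_solRadical {N : Subgroup G} (hN : N.Normal) (hs : IsSolvable ↥N) :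
    N ≤ solRadical G :=
  le_sSup ⟨hN, hs⟩

lemma sup_normal_solvable {A B : Subgroup G} (hA : A.Normal) (hB : B.Normal)
    (hsA : IsSolvable ↥A) (hsB : IsSolvable ↥B) :
    (A ⊔ B).Normal ∧ IsSolvable ↥(A ⊔ B) := by
  haveI := hB
  constructor
  · constructor
    intro x hx g
    rw [mem_sup_normal_iff hB] at hx ⊢
    obtain ⟨a, ha, b, hb, rfl⟩ := hx
    exact ⟨g * a * g⁻¹, hA.conj_mem a ha g, g * b * g⁻¹, hB.conj_mem b hb g, by group⟩
  · haveI : Group.IsSolvable ↥A := hsA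
    haveI : (B.subgroupOf (A ⊔ B)).Normal := Subgroup.normal_subgroupOf
    haveI hsolN' : Group.IsSolvable ↥(B.subgroupOf (A ⊔ B)) :=
      isSolvable_mulEquiv (Subgroup.subgroupOfEquivOfLe (le_sup_right : B ≤ A ⊔ B)).symm hsB
    haveI hq : Group.IsSolvable (↥(A ⊔ B) ⧸ B.subgroupOf (A ⊔ B)) := by
      apply solvable_of_surjective
        (f := (QuotientGroup.mk' (B.subgroupOf (A ⊔ B))).comp
          (Subgroup.inclusion (le_sup_left : A ≤ A ⊔ B)))
      intro q
      obtain ⟨⟨x, hx⟩, rfl⟩ := QuotientGroup.mk'_surjective _ q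
      have hx2 := hx
      rw [mem_sup_normal_iff hB] at hx2
      obtain ⟨a, ha, b, hb, hab⟩ := hx2
      refine ⟨⟨a, ha⟩, ?_⟩
      rw [MonoidHom.comp_apply, QuotientGroup.mk'_eq_mk']
      refine ⟨⟨a⁻¹ * x, mul_mem (inv_mem ((le_sup_left : A ≤ A ⊔ B) ha)) hx⟩, ?_, ?_⟩
      · rw [Subgroup.mem_subgroupOf]
        show a⁻¹ * x ∈ B
        have : a⁻¹ * x = b := by rw [← hab]; group
        rw [this]; exact hb
      · apply Subtype.ext
        show a * (a⁻¹ * x) = x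
        group
    exact solvable_of_ker_le_range (B.subgroupOf (A ⊔ B)).subtype
      (QuotientGroup.mk' (B.subgroupOf (A ⊔ B)))
      (le_of_eq (by rw [QuotientGroup.ker_mk', Subgroup.range_subtype]))

lemma isSolvable_solRadical (G : Type*) [Group G] [Finite G] :
    IsSolvable ↥(solRadical G) := by
  haveI : Finite (Subgroup G) :=
    Finite.of_injective (fun H : Subgroup G => (H : Set G)) SetLike.coe_injective
  have key : ∀ t : Set (Subgroup G), t.Finite →
      ((∀ N ∈ t, N.Normal ∧ IsSolvable ↥N) → (sSup t).Normal ∧ IsSolvable ↥(sSup t)) := by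
    intro t ht
    refine Set.Finite.induction_on
      (motive := fun (s : Set (Subgroup G)) _ => (∀ N ∈ s, N.Normal ∧ IsSolvable ↥N) →
        (sSup s).Normal ∧ IsSolvable ↥(sSup s)) t ht ?_ ?_
    · intro _
      rw [sSup_empty]
      refine ⟨inferInstance, ?_⟩
      haveI : Subsingleton ↥(⊥ : Subgroup G) :=
        ⟨fun a b => Subtype.ext (by rw [Subgroup.mem_bot.mp a.2, Subgroup.mem_bot.mp b.2])⟩
      exact (inferInstance : Group.IsSolvable ↥(⊥ : Subgroup G))
    · intro a s _ _ ih h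
      rw [sSup_insert]
      have ha := h a (Set.mem_insert a s)
      have hs := ih (fun N hN => h N (Set.mem_insert_of_mem a hN))
      exact sup_normal_solvable ha.1 hs.1 ha.2 hs.2
  exact (key {N : Subgroup G | N.Normal ∧ IsSolvable ↥N} (Set.toFinite _) (fun N hN => hN)).2

lemma solRadical_le_comap_mulEquiv {H : Type*} [Group H] (φ : H ≃* H) :
    solRadical H ≤ (solRadical H).comap φ.toMonoidHom := by
  apply sSup_le
  rintro N ⟨hN, hNs⟩ x hx
  rw [Subgroup.mem_comap]
  have h1 : (N.map φ.toMonoidHom).Normal := hN.map _ φ.surjective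
  have h2 : IsSolvable ↥(N.map φ.toMonoidHom) :=
    isSolvable_mulEquiv (Subgroup.equivMapOfInjective N φ.toMonoidHom φ.injective) hNs
  exact le_solRadical h1 h2 (Subgroup.mem_map_of_mem _ hx)

/-- Conjugation as an automorphism of a subgroup. -/
def conjE {M : Subgroup G} {g : G} (h1 : ∀ x ∈ M, g * x * g⁻¹ ∈ M)
    (h2 : ∀ x ∈ M, g⁻¹ * x * g ∈ M) : ↥M ≃* ↥M where
  toFun x := ⟨g * x * g⁻¹, h1 x x.2⟩
  invFun x := ⟨g⁻¹ * x * g, h2 x x.2⟩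
  left_inv x := Subtype.ext (by show g⁻¹ * (g * ↑x * g⁻¹) * g = ↑x; group)
  right_inv x := Subtype.ext (by show g * (g⁻¹ * ↑x * g) * g⁻¹ = ↑x; group)
  map_mul' x y := Subtype.ext (by
    show g * ↑(x * y) * g⁻¹ = (g * ↑x * g⁻¹) * (g * ↑y * g⁻¹)
    push_cast
    group)

/-- `Sol(M)` viewed inside the ambient group. -/
def SolIn (M : Subgroup G) : Subgroup G := (solRadical ↥M).map M.subtype

lemma solIn_le (M : Subgroup G) : SolIn M ≤ M := Subgroup.map_subtype_le _

lemma solIn_solvable [Finite G] (M : Subgroup G) : IsSolvable ↥(SolIn M) :=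
  isSolvable_mulEquiv
    (Subgroup.equivMapOfInjective (solRadical ↥M) M.subtype M.subtype_injective)
    (isSolvable_solRadical ↥M)

lemma le_solIn {X M : Subgroup G} (h : RelNorm X M) (hs : IsSolvable ↥X) : X ≤ SolIn M := by
  have h1 : (X.subgroupOf M).Normal := (relNorm_iff.mp h).2
  have h2 : IsSolvable ↥(X.subgroupOf M) :=
    isSolvable_mulEquiv (Subgroup.subgroupOfEquivOfLe h.1).symm hs
  have h3 : X.subgroupOf M ≤ solRadical ↥M := le_solRadical h1 h2
  have h4 := Subgroup.map_mono (f := M.subtype) h3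
  rwa [Subgroup.subgroupOf_map_subtype, inf_of_le_left h.1] at h4

lemma solIn_relNorm {M M' : Subgroup G} (h : RelNorm M M') : RelNorm (SolIn M) M' := by
  refine ⟨le_trans (solIn_le M) h.1, ?_⟩
  intro x hx g hg
  obtain ⟨y, hy, rfl⟩ := Subgroup.mem_map.mp hx
  set φ := conjE (M := M) (g := g) (fun z hz => h.2 z hz g hg)
    (fun z hz => by simpa using h.2 z hz g⁻¹ (inv_mem hg))
  have hmem : φ y ∈ solRadical ↥M := solRadical_le_comap_mulEquiv φ hy
  exact Subgroup.mem_map.mpr ⟨φ y, hmem, rfl⟩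

lemma subnormIn_solvable_le_solIn [Finite G] :
    ∀ n {X M : Subgroup G}, SubnormIn X M (n + 1) → IsSolvable ↥X → X ≤ SolIn M := by
  intro n
  induction n with
  | zero =>
    intro X M h hs
    obtain ⟨B, hB, hBM⟩ := h.peelTop
    rw [hB.eq_of_zero] at hs ⊢
    exact le_solIn hBM hs
  | succ n ih =>
    intro X M h hs
    obtain ⟨B, hXB, hBM⟩ := h.peelTop
    exact le_trans (ih hXB hs) (le_solIn (solIn_relNorm hBM) (solIn_solvable B))

lemma subnorm_solvable_le_solRadical [Finite G] {X : Subgroup G} (hs : IsSolvable ↥X)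
    (h : Subnorm X ⊤) : X ≤ solRadical G := by
  obtain ⟨n, hn⟩ := h
  cases n with
  | zero =>
    have hX : X = ⊤ := hn.eq_of_zero
    have hs' : IsSolvable ↥(⊤ : Subgroup G) := hX ▸ hs
    rw [hX]
    exact le_solRadical inferInstance hs'
  | succ m =>
    have hX : X ≤ SolIn ⊤ := subnormIn_solvable_le_solIn m hn hs
    have h3 : RelNorm (SolIn (⊤ : Subgroup G)) ⊤ := solIn_relNorm (RelNorm.refl ⊤)
    exact hX.trans (le_solRadical (relNorm_top h3) (solIn_solvable ⊤))

/-! ### Iterated commutators -/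

def iterComm (M : Subgroup G) : ℕ → Subgroup G
  | 0 => M
  | (k + 1) => ⁅iterComm M k, iterComm M k⁆

lemma iterComm_mono {A B : Subgroup G} (h : A ≤ B) : ∀ k, iterComm A k ≤ iterComm B k
  | 0 => h
  | (k + 1) => Subgroup.commutator_mono (iterComm_mono h k) (iterComm_mono h k)

lemma iterComm_add (M : Subgroup G) (k : ℕ) :
    ∀ m, iterComm M (k + m) = iterComm (iterComm M k) m
  | 0 => rfl
  | (m + 1) => by
    show iterComm M (k + m + 1) = _
    show ⁅iterComm M (k + m), iterComm M (k + m)⁆ = ⁅iterComm (iterComm M k) m, _⁆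
    rw [iterComm_add M k m]

lemma perfect_le_iterComm {X M : Subgroup G} (hp : commutator ↥X = ⊤) (hle : X ≤ M) :
    ∀ k, X ≤ iterComm M k
  | 0 => hle
  | (k + 1) => by
    conv_lhs => rw [← perfect_commutator_self hp]
    exact Subgroup.commutator_mono (perfect_le_iterComm hp hle k) (perfect_le_iterComm hp hle k)

lemma iterComm_eq_map (M : Subgroup G) :
    ∀ k, iterComm M k = Subgroup.map M.subtype (derivedSeries ↥M k)
  | 0 => (map_subtype_top M).symm
  | (k + 1) => by
    show ⁅iterComm M k, iterComm M k⁆ = Subgroup.map M.subtype ⁅derivedSeries ↥M k, _⁆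
    rw [Subgroup.map_commutator, ← iterComm_eq_map M k]

lemma map_iterComm {G' : Type*} [Group G'] (f : G →* G') (M : Subgroup G) :
    ∀ k, Subgroup.map f (iterComm M k) = iterComm (Subgroup.map f M) k
  | 0 => rfl
  | (k + 1) => by
    show Subgroup.map f ⁅iterComm M k, iterComm M k⁆ = ⁅iterComm (Subgroup.map f M) k, _⁆
    rw [Subgroup.map_commutator, map_iterComm f M k]

/-! ### Quasisimple subnormal subgroups -/

lemma quasisimple_relNorm_dichotomy {K N : Subgroup G} (hq : IsQuasisimpleGroup ↥K)
    (hN : RelNorm N K) : K ≤ N ∨ ⁅K, N⁆ = ⊥ := by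
  obtain ⟨hperf, hsimple⟩ := hq
  haveI hNn : (N.subgroupOf K).Normal := (relNorm_iff.mp hN).2
  have hmap := hsimple.eq_bot_or_eq_top_of_normal
    ((N.subgroupOf K).map (QuotientGroup.mk' (Subgroup.center ↥K)))
    (hNn.map _ (QuotientGroup.mk'_surjective _))
  rcases hmap with hbot | htop
  · right
    rw [Subgroup.map_eq_bot_iff, QuotientGroup.ker_mk'] at hbot
    rw [eq_bot_iff]
    apply Subgroup.commutator_le.mpr
    intro k hk n hn
    have hz : (⟨n, hN.1 hn⟩ : ↥K) ∈ Subgroup.center ↥K :=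
      hbot (Subgroup.mem_subgroupOf.mpr hn)
    have hc := Subgroup.mem_center_iff.mp hz ⟨k, hk⟩
    have hcomm : k * n = n * k := congrArg Subtype.val hc
    rw [Subgroup.mem_bot]
    exact commutatorElement_eq_one_iff_mul_comm.mpr hcomm
  · left
    have hsup : N.subgroupOf K ⊔ Subgroup.center ↥K = ⊤ := by
      have h2 := congrArg (Subgroup.comap (QuotientGroup.mk' (Subgroup.center ↥K))) htop
      rwa [Subgroup.comap_map_eq, QuotientGroup.ker_mk', Subgroup.comap_top] at h2
    set π := QuotientGroup.mk' (N.subgroupOf K) with hπdef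
    have hsurjZ : ∀ a : ↥K ⧸ N.subgroupOf K, ∃ z ∈ Subgroup.center ↥K, π z = a := by
      intro a
      obtain ⟨x, rfl⟩ := QuotientGroup.mk'_surjective _ a
      have hxmem : x ∈ (↑(N.subgroupOf K) * ↑(Subgroup.center ↥K) : Set ↥K) := by
        rw [← Subgroup.mul_normal, hsup]
        trivial
      obtain ⟨nn, hnn, z, hz, rfl⟩ := hxmem
      refine ⟨z, hz, ?_⟩
      have h1 : π nn = 1 := by
        rw [← MonoidHom.mem_ker, hπdef, QuotientGroup.ker_mk']
        exact hnn
      rw [map_mul, h1, one_mul]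
    have hab : ∀ a b : ↥K ⧸ N.subgroupOf K, a * b = b * a := by
      intro a b
      obtain ⟨z, hz, rfl⟩ := hsurjZ a
      obtain ⟨w, hw, rfl⟩ := hsurjZ b
      rw [← map_mul, ← map_mul, Subgroup.mem_center_iff.mp hz w]
    have hQperf : commutator (↥K ⧸ N.subgroupOf K) = ⊤ := by
      have htop' : Subgroup.map π (⊤ : Subgroup ↥K) = ⊤ :=
        Subgroup.map_top_of_surjective π (QuotientGroup.mk'_surjective _)
      rw [_root_.commutator_def, ← htop', ← Subgroup.map_commutator, ← _root_.commutator_def, hperf, htop']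
    have hQbot : commutator (↥K ⧸ N.subgroupOf K) = ⊥ := by
      rw [_root_.commutator_def, eq_bot_iff]
      apply Subgroup.commutator_le.mpr
      intro a _ b _
      rw [Subgroup.mem_bot]
      exact commutatorElement_eq_one_iff_mul_comm.mpr (hab a b)
    intro x hx
    have h1 : π ⟨x, hx⟩ ∈ (⊥ : Subgroup (↥K ⧸ N.subgroupOf K)) := by
      rw [← hQbot, hQperf]
      trivial
    rw [Subgroup.mem_bot] at h1
    have h2 : (⟨x, hx⟩ : ↥K) ∈ N.subgroupOf K := by
      rwa [← QuotientGroup.ker_mk' (N.subgroupOf K), MonoidHom.mem_ker]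
    exact Subgroup.mem_subgroupOf.mp h2

lemma quasisimple_subnorm_relNorm {K M : Subgroup G} (hq : IsQuasisimpleGroup ↥K) :
    ∀ n, SubnormIn K M n → ∀ {N : Subgroup G}, RelNorm N M → K ≤ N ∨ ⁅K, N⁆ = ⊥ := by
  intro n
  induction n generalizing M with
  | zero =>
    intro h N hN
    rw [← h.eq_of_zero] at hN
    exact quasisimple_relNorm_dichotomy hq hN
  | succ n ih =>
    intro h N hN
    obtain ⟨B, hKB, hBM⟩ := h.peelTop
    have hNB : RelNorm (N ⊓ B) B := by
      refine ⟨inf_le_right, ?_⟩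
      intro x hx g hg
      rw [Subgroup.mem_inf] at hx ⊢
      exact ⟨hN.2 x hx.1 g (hBM.1 hg), mul_mem (mul_mem hg hx.2) (inv_mem hg)⟩
    rcases ih hKB hNB with h1 | h1
    · exact Or.inl (h1.trans inf_le_left)
    · right
      have hKM : K ≤ M := h.le
      have hKB' : K ≤ B := hKB.le
      have hKN_le : ⁅K, N⁆ ≤ N ⊓ B := by
        apply Subgroup.commutator_le.mpr
        intro k hk x hx
        rw [Subgroup.mem_inf]
        constructor
        · have h2 : k * x * k⁻¹ ∈ N := hN.2 x hx k (hKM hk)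
          have he : ⁅k, x⁆ = k * x * k⁻¹ * x⁻¹ := commutatorElement_def k x
          rw [he]
          exact mul_mem h2 (inv_mem hx)
        · have h2 : x * k⁻¹ * x⁻¹ ∈ B := hBM.2 k⁻¹ (inv_mem (hKB' hk)) x (hN.1 hx)
          have he : ⁅k, x⁆ = k * (x * k⁻¹ * x⁻¹) := by
            rw [commutatorElement_def]; group
          rw [he]
          exact mul_mem (hKB' hk) h2
      have h3 : ⁅⁅K, N⁆, K⁆ = ⊥ := by
        rw [eq_bot_iff, ← h1, Subgroup.commutator_comm K (N ⊓ B)]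
        exact Subgroup.commutator_mono hKN_le le_rfl
      have h4 : ⁅⁅N, K⁆, K⁆ = ⊥ := by rwa [Subgroup.commutator_comm N K]
      have h5 := Subgroup.commutator_commutator_eq_bot_of_rotate h3 h4
      rwa [perfect_commutator_self hq.1] at h5

lemma quasisimple_subnorm_subnorm {K M : Subgroup G} (hq : IsQuasisimpleGroup ↥K)
    (hK : Subnorm K M) : ∀ e {N : Subgroup G}, SubnormIn N M e → K ≤ N ∨ ⁅K, N⁆ = ⊥ := by
  intro e
  induction e with
  | zero =>
    intro N h
    rw [h.eq_of_zero]
    obtain ⟨m, hm⟩ := hK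
    exact Or.inl hm.le
  | succ e ih =>
    intro N h
    obtain ⟨N₁, hNN₁, hN₁M⟩ := h.peelBot
    rcases ih hN₁M with h1 | h1
    · obtain ⟨m, hm⟩ := hK
      have hKn : SubnormIn K N₁ m := by
        have h2 := hm.inf N₁
        rwa [inf_of_le_left h1, inf_of_le_right hN₁M.le] at h2
      exact quasisimple_subnorm_relNorm hq m hKn hNN₁
    · right
      rw [eq_bot_iff, ← h1]
      exact Subgroup.commutator_mono le_rfl hNN₁.1

lemma components_commute {Q : Type*} [Group Q] {A B : Subgroup Q} (hA : IsComponent A)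
    (hB : IsComponent B) (hne : A ≠ B) : ⁅A, B⁆ = ⊥ := by
  obtain ⟨nB, hBo⟩ := isSubnormal_iff_subnorm.mp hB.1
  obtain ⟨nA, hAo⟩ := isSubnormal_iff_subnorm.mp hA.1
  rcases quasisimple_subnorm_subnorm hA.2 ⟨nA, hAo⟩ nB hBo with h1 | h1
  · rcases quasisimple_subnorm_subnorm hB.2 ⟨nB, hBo⟩ nA hAo with h2 | h2
    · exact absurd (le_antisymm h1 h2) hne
    · rw [Subgroup.commutator_comm]; exact h2
  · exact h1

/-! ### Descending to a perfect subnormal subgroup modulo a solvable normal subgroup -/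

lemma iterComm_le_of_subnorm {S : Subgroup G} (hS : S.Normal) (hSsol : IsSolvable ↥S) :
    ∀ n {X M : Subgroup G}, SubnormIn X M n → M ≤ X ⊔ S → ∃ k, iterComm M k ≤ X := by
  haveI : Group.IsSolvable ↥S := hSsol
  intro n
  induction n with
  | zero =>
    intro X M h _
    exact ⟨0, le_of_eq h.eq_of_zero.symm⟩
  | succ n ih =>
    intro X M h hle
    obtain ⟨B, hXB, hBM⟩ := h.peelBot
    obtain ⟨k, hk⟩ := ih hBM (le_trans hle (sup_le_sup_right hXB.1 S))
    haveI : (X.subgroupOf B).Normal := (relNorm_iff.mp hXB).2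
    set π := QuotientGroup.mk' (X.subgroupOf B) with hπdef
    haveI : Group.IsSolvable ↥(S ⊓ B) :=
      solvable_of_solvable_injective (f := Subgroup.inclusion (inf_le_left : S ⊓ B ≤ S))
        (Subgroup.inclusion_injective _)
    have hsurj : Function.Surjective
        (π.comp (Subgroup.inclusion (inf_le_right : S ⊓ B ≤ B))) := by
      intro q
      obtain ⟨⟨b, hb⟩, rfl⟩ := QuotientGroup.mk'_surjective _ q
      have hb2 : b ∈ X ⊔ S := hle (hBM.le hb)
      rw [mem_sup_normal_iff hS] at hb2
      obtain ⟨x, hx, s, hs, hxs⟩ := hb2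
      have hsB : s ∈ B := by
        have he : s = x⁻¹ * b := by rw [← hxs]; group
        rw [he]
        exact mul_mem (inv_mem (hXB.1 hx)) hb
      refine ⟨⟨s, Subgroup.mem_inf.mpr ⟨hs, hsB⟩⟩, ?_⟩
      rw [MonoidHom.comp_apply, hπdef, QuotientGroup.mk'_eq_mk']
      refine ⟨⟨s⁻¹ * b, mul_mem (inv_mem hsB) hb⟩, ?_, ?_⟩
      · rw [Subgroup.mem_subgroupOf]
        show s⁻¹ * b ∈ X
        have he : s⁻¹ * b = s⁻¹ * x * (s⁻¹)⁻¹ := by rw [← hxs]; group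
        rw [he]
        exact hXB.2 x hx s⁻¹ (inv_mem hsB)
      · apply Subtype.ext
        push_cast [Subgroup.coe_inclusion]
        group
    haveI hQsol : Group.IsSolvable (↥B ⧸ X.subgroupOf B) := solvable_of_surjective hsurj
    obtain ⟨m, hm⟩ := hQsol.solvable
    have hle2 : derivedSeries ↥B m ≤ X.subgroupOf B := by
      rw [← QuotientGroup.ker_mk' (X.subgroupOf B), ← Subgroup.map_eq_bot_iff (f := π)]
      rw [map_derivedSeries_eq (QuotientGroup.mk'_surjective _) m]
      exact hm
    have hfin : iterComm B m ≤ X := by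
      rw [iterComm_eq_map]
      calc Subgroup.map B.subtype (derivedSeries ↥B m)
          ≤ Subgroup.map B.subtype (X.subgroupOf B) := Subgroup.map_mono hle2
        _ = X ⊓ B := Subgroup.subgroupOf_map_subtype X B
        _ ≤ X := inf_le_left
    refine ⟨k + m, ?_⟩
    rw [iterComm_add]
    exact le_trans (iterComm_mono hk m) hfin

/-- A sol-component normalizes anything with which it commutes modulo `Sol(G)`. -/
lemma normalizes_of_commutator_le_solRadical {G : Type*} [Group G] [Finite G]
    {K L : Subgroup G} (hLsub : _root_.IsSubnormal L) (hLperf : commutator ↥L = ⊤)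
    (hKLS : ⁅K, L⁆ ≤ solRadical G) : K ≤ Subgroup.normalizer (L : Set G) := by
  set S := solRadical G with hSdef
  have hSnorm : S.Normal := solRadical_normal G
  have hSsol : IsSolvable ↥S := isSolvable_solRadical G
  set M : Subgroup G := L ⊔ S with hM
  have hLsn : Subnorm L M := by
    obtain ⟨n, hn⟩ := isSubnormal_iff_subnorm.mp hLsub
    refine ⟨n, ?_⟩
    have h2 := hn.inf M
    rwa [inf_of_le_left (le_sup_left : L ≤ M), top_inf_eq] at h2
  obtain ⟨n, hn⟩ := hLsn
  obtain ⟨j, hj⟩ := iterComm_le_of_subnorm hSnorm hSsol n hn le_rfl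
  have hLj : L = iterComm M j := le_antisymm (perfect_le_iterComm hLperf le_sup_left j) hj
  have hconjM : ∀ g ∈ K, ∀ x ∈ M, g * x * g⁻¹ ∈ M := by
    intro g hg x hx
    rw [hM, mem_sup_normal_iff hSnorm] at hx
    obtain ⟨l, hl, s, hs, rfl⟩ := hx
    have hLM' : L ≤ M := le_sup_left
    have hSM' : S ≤ M := le_sup_right
    have h1 : g * l * g⁻¹ ∈ M := by
      have hcS : l⁻¹ * (g * l * g⁻¹) ∈ S := by
        have hcc : ⁅l⁻¹, g⁆ ∈ ⁅L, K⁆ := Subgroup.commutator_mem_commutator (inv_mem hl) hg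
        rw [Subgroup.commutator_comm] at hcc
        have h2 := hKLS hcc
        have he : l⁻¹ * (g * l * g⁻¹) = ⁅l⁻¹, g⁆ := by
          rw [commutatorElement_def]; group
        rwa [he]
      have he : g * l * g⁻¹ = l * (l⁻¹ * (g * l * g⁻¹)) := by group
      rw [he]
      exact mul_mem (hLM' hl) (hSM' hcS)
    have h2 : g * s * g⁻¹ ∈ M := (le_sup_right : S ≤ L ⊔ S) (hSnorm.conj_mem s hs g)
    have he : g * (l * s) * g⁻¹ = (g * l * g⁻¹) * (g * s * g⁻¹) := by group
    rw [he]
    exact mul_mem h1 h2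
  intro g hg
  have hmapM : Subgroup.map (MulAut.conj g).toMonoidHom M = M := by
    apply le_antisymm
    · rintro _ ⟨x, hx, rfl⟩
      simpa [MulAut.conj_apply] using hconjM g hg x hx
    · intro x hx
      refine ⟨g⁻¹ * x * g, ?_, ?_⟩
      · have := hconjM g⁻¹ (inv_mem hg) x hx
        simpa using this
      · simp [MulAut.conj_apply]
        group
  have hmapIter : Subgroup.map (MulAut.conj g).toMonoidHom (iterComm M j) = iterComm M j := by
    rw [map_iterComm, hmapM]
  rw [Subgroup.mem_normalizer_iff]
  intro h
  constructor
  · intro hh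
    rw [hLj] at hh ⊢
    rw [← hmapIter]
    exact ⟨h, hh, by simp [MulAut.conj_apply]⟩
  · intro hh
    rw [hLj] at hh ⊢
    rw [← hmapIter] at hh
    obtain ⟨y, hy, hy2⟩ := hh
    have hyx : y = h := by
      have h2 : g * y * g⁻¹ = g * h * g⁻¹ := by simpa [MulAut.conj_apply] using hy2
      exact mul_left_cancel (mul_right_cancel h2)
    rwa [← hyx]

end Aux
open scoped commutatorElement
/-- Distinct sol-components `K`, `L` of `G` normalize each other,
`[K,L] ≤ Sol(K) ∩ Sol(L)`, and `Sol(K) ∩ Sol(L)` is contained in `Sol(G)` and is a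
subnormal subgroup of `Sol(G)`. -/
theorem distinct_solComponents_commute_mod_solRadical
    {G : Type*} [Group G] [Finite G] (K L : Subgroup G)
    (hK : IsSolComponent K) (hL : IsSolComponent L) (hne : K ≠ L) :
    K ≤ Subgroup.normalizer (L : Set G) ∧ L ≤ Subgroup.normalizer (K : Set G) ∧
      ⁅K, L⁆ ≤ (solRadical ↥K).map K.subtype ⊓ (solRadical ↥L).map L.subtype ∧
      (solRadical ↥K).map K.subtype ⊓ (solRadical ↥L).map L.subtype ≤ solRadical G ∧
      IsSubnormal (((solRadical ↥K).map K.subtype ⊓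
        (solRadical ↥L).map L.subtype).subgroupOf (solRadical G)) := by
  obtain ⟨hKsub, hKperf, hKcomp⟩ := hK
  obtain ⟨hLsub, hLperf, hLcomp⟩ := hL
  have hSnorm : (solRadical G).Normal := solRadical_normal G
  have hSsol : IsSolvable ↥(solRadical G) := isSolvable_solRadical G
  set S := solRadical G with hSdef
  set π := QuotientGroup.mk' S with hπdef
  have hsub_of_eq : ∀ A B : Subgroup G, A.map π = B.map π → B ≤ A ⊔ S := by
    intro A B heq b hb
    have h1 : π b ∈ A.map π := heq ▸ Subgroup.mem_map_of_mem π hb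
    obtain ⟨a, ha, hab⟩ := Subgroup.mem_map.mp h1
    rw [mem_sup_normal_iff hSnorm]
    refine ⟨a, ha, a⁻¹ * b, ?_, by group⟩
    have hker : π (a⁻¹ * b) = 1 := by rw [map_mul, map_inv, hab]; group
    rw [← QuotientGroup.ker_mk' S]
    exact hker
  have himg : K.map π ≠ L.map π := by
    intro heq
    apply hne
    have hLM : L ≤ K ⊔ S := hsub_of_eq K L heq
    have hKM : K ≤ L ⊔ S := hsub_of_eq L K heq.symm
    have hsn : ∀ A : Subgroup G, IsSubnormal A → A ≤ K ⊔ S → Subnorm A (K ⊔ S) := by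
      intro A hA hle
      obtain ⟨n, hn⟩ := isSubnormal_iff_subnorm.mp hA
      refine ⟨n, ?_⟩
      have h2 := hn.inf (K ⊔ S)
      rwa [inf_of_le_left hle, top_inf_eq] at h2
    obtain ⟨nK, hnK⟩ := hsn K hKsub le_sup_left
    obtain ⟨nL, hnL⟩ := hsn L hLsub hLM
    obtain ⟨a, ha⟩ := iterComm_le_of_subnorm hSnorm hSsol nK hnK le_rfl
    obtain ⟨b, hb⟩ := iterComm_le_of_subnorm hSnorm hSsol nL hnL (sup_le hKM le_sup_right)
    exact le_antisymm (le_trans (perfect_le_iterComm hKperf le_sup_left b) hb)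
      (le_trans (perfect_le_iterComm hLperf hLM a) ha)
  have hcomm : ⁅K.map π, L.map π⁆ = ⊥ := components_commute hKcomp hLcomp himg
  have hKLS : ⁅K, L⁆ ≤ S := by
    have h1 : (⁅K, L⁆).map π = ⊥ := by rw [Subgroup.map_commutator]; exact hcomm
    have h2 := (Subgroup.map_eq_bot_iff ⁅K, L⁆).mp h1
    rwa [hπdef, QuotientGroup.ker_mk'] at h2
  have hKnL : K ≤ Subgroup.normalizer (L : Set G) := normalizes_of_commutator_le_solRadical hLsub hLperf hKLS
  have hLKS : ⁅L, K⁆ ≤ S := by rwa [Subgroup.commutator_comm]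
  have hLnK : L ≤ Subgroup.normalizer (K : Set G) := normalizes_of_commutator_le_solRadical hKsub hKperf hLKS
  have hKLK : ⁅K, L⁆ ≤ K := by
    apply Subgroup.commutator_le.mpr
    intro k hk l hl
    have h1 : l * k⁻¹ * l⁻¹ ∈ K := (Subgroup.mem_normalizer_iff.mp (hLnK hl) k⁻¹).mp (inv_mem hk)
    have he : ⁅k, l⁆ = k * (l * k⁻¹ * l⁻¹) := by rw [commutatorElement_def]; group
    rw [he]
    exact mul_mem hk h1
  have hKLL : ⁅K, L⁆ ≤ L := by
    apply Subgroup.commutator_le.mpr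
    intro k hk l hl
    have h1 : k * l * k⁻¹ ∈ L := (Subgroup.mem_normalizer_iff.mp (hKnL hk) l).mp hl
    have he : ⁅k, l⁆ = (k * l * k⁻¹) * l⁻¹ := commutatorElement_def k l
    rw [he]
    exact mul_mem h1 (inv_mem hl)
  have hinf : ∀ A : Subgroup G, RelNorm (A ⊓ S) A ∧ IsSolvable ↥(A ⊓ S) := by
    intro A
    constructor
    · refine ⟨inf_le_left, ?_⟩
      intro x hx g hg
      rw [Subgroup.mem_inf] at hx ⊢
      exact ⟨mul_mem (mul_mem hg hx.1) (inv_mem hg), hSnorm.conj_mem x hx.2 g⟩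
    · haveI : Group.IsSolvable ↥S := hSsol
      exact solvable_of_solvable_injective
        (f := Subgroup.inclusion (inf_le_right : A ⊓ S ≤ S)) (Subgroup.inclusion_injective _)
  have hKS : K ⊓ S ≤ SolIn K := le_solIn (hinf K).1 (hinf K).2
  have hLS : L ⊓ S ≤ SolIn L := le_solIn (hinf L).1 (hinf L).2
  have hmain3 : ⁅K, L⁆ ≤ SolIn K ⊓ SolIn L :=
    le_inf (le_trans (le_inf hKLK hKLS) hKS) (le_trans (le_inf hKLL hKLS) hLS)
  have hSolSn : ∀ A : Subgroup G, IsSubnormal A → Subnorm (SolIn A) ⊤ := by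
    intro A hA
    obtain ⟨n, hn⟩ := isSubnormal_iff_subnorm.mp hA
    exact ⟨n + 1, SubnormIn.consBot (solIn_relNorm (RelNorm.refl A)) hn⟩
  have hSolK_S : SolIn K ≤ S :=
    subnorm_solvable_le_solRadical (solIn_solvable K) (hSolSn K hKsub)
  have hmain4 : SolIn K ⊓ SolIn L ≤ S := le_trans inf_le_left hSolK_S
  obtain ⟨mK, hmK⟩ := hSolSn K hKsub
  obtain ⟨mL, hmL⟩ := hSolSn L hLsub
  have h1 := hmK.inf (SolIn L)
  rw [top_inf_eq] at h1
  have h2 := (h1.trans hmL).inf S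
  rw [top_inf_eq, inf_of_le_left hmain4] at h2
  have h3 := h2.subgroupOf (le_refl S)
  rw [Subgroup.subgroupOf_self] at h3
  exact ⟨hKnL, hLnK, hmain3, hmain4, isSubnormal_iff_subnorm.mpr ⟨_, h3⟩⟩
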